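/- Let F be a finite subset of ℤ² with nonincreasing row sums (r_i) and nonincreasing column sums (c_j), and let v_j = #{l : r_l ≥ j}. If c_j = v_j for all j, then F is uniquely determined by its row and column sums: any finite F' ⊆ ℤ² with the same row sums and column sums equals F. -/

import Mathlib

open Finset

/-- Number of elements of `F` in row `i`. -/
def rowSum (F : Finset (ℤ × ℤ)) (i : ℤ) : ℕ := (F.filter fun p => p.1 = i).card

/-- Number of elements of `F` in column `j`. -/
def colSum (F : Finset (ℤ × ℤ)) (j : ℤ) : ℕ := (F.filter fun p => p.2 = j).card

/-- `F` has row sums `r` on rows `1..m`, column sums `c` on columns `1..n`,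
and zero line sums elsewhere. -/
def hasLineSums (F : Finset (ℤ × ℤ)) (m n : ℕ) (r : Fin m → ℕ) (c : Fin n → ℕ) : Prop :=
  (∀ i : Fin m, rowSum F ((i : ℤ) + 1) = r i) ∧
  (∀ i : ℤ, (∀ k : Fin m, (k : ℤ) + 1 ≠ i) → rowSum F i = 0) ∧
  (∀ j : Fin n, colSum F ((j : ℤ) + 1) = c j) ∧
  (∀ j : ℤ, (∀ k : Fin n, (k : ℤ) + 1 ≠ j) → colSum F j = 0)

/-- The conjugate partition: `conj m r j = #{l : r l ≥ j}`. -/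
def conj (m : ℕ) (r : Fin m → ℕ) (j : ℕ) : ℕ := (Finset.univ.filter fun l => j ≤ r l).card

/-- auxiliary lemmas -/
lemma conj_partial (m n k : ℕ) (r : Fin m → ℕ) (hk : k ≤ n) :
    ∑ j : Fin n, (if (j : ℕ) + 1 ≤ k then conj m r ((j : ℕ) + 1) else 0)
      = ∑ i : Fin m, min (r i) k := by
  rw [Fin.sum_univ_eq_sum_range (fun j => if j + 1 ≤ k then conj m r (j + 1) else 0) n]
  rw [← Finset.sum_filter]
  have h1 : (Finset.range n).filter (fun j => j + 1 ≤ k) = Finset.range k := by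
    ext a; simp [Finset.mem_filter, Finset.mem_range]; omega
  rw [h1]
  have h2 : ∀ j, conj m r (j + 1) = ∑ i : Fin m, if j + 1 ≤ r i then 1 else 0 := by
    intro j; rw [conj, Finset.card_filter]
  simp_rw [h2]
  rw [Finset.sum_comm]
  congr 1; ext i
  rw [← Finset.card_filter]
  have h3 : (Finset.range k).filter (fun j => j + 1 ≤ r i) = Finset.range (min (r i) k) := by
    ext a; simp [Finset.mem_filter, Finset.mem_range]; omega
  rw [h3, Finset.card_range]

lemma key (m n : ℕ) (r : Fin m → ℕ) (G : Finset (ℤ × ℤ))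
    (h1 : ∀ i : Fin m, rowSum G ((i : ℤ) + 1) = r i)
    (h2 : ∀ i : ℤ, (∀ k : Fin m, (k : ℤ) + 1 ≠ i) → rowSum G i = 0)
    (h3 : ∀ j : Fin n, colSum G ((j : ℤ) + 1) = conj m r ((j : ℕ) + 1))
    (h4 : ∀ j : ℤ, (∀ k : Fin n, (k : ℤ) + 1 ≠ j) → colSum G j = 0) :
    ∀ p : ℤ × ℤ, p ∈ G ↔ ∃ i : Fin m, ∃ jn : ℕ, jn < r i ∧ p = ((i : ℤ) + 1, (jn : ℤ) + 1) := by
  classical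
  -- every point lies in a row 1..m
  have hrow : ∀ p ∈ G, ∃ i : Fin m, p.1 = (i : ℤ) + 1 := by
    intro p hp
    by_contra hcon
    push_neg at hcon
    have h0 := h2 p.1 (fun k hk => (hcon k) hk.symm)
    rw [rowSum, Finset.card_eq_zero] at h0
    have : p ∈ G.filter fun q => q.1 = p.1 := by simp [Finset.mem_filter, hp]
    rw [h0] at this; simp at this
  have hcol : ∀ p ∈ G, ∃ j : Fin n, p.2 = (j : ℤ) + 1 := by
    intro p hp
    by_contra hcon
    push_neg at hcon
    have h0 := h4 p.2 (fun k hk => (hcon k) hk.symm)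
    rw [colSum, Finset.card_eq_zero] at h0
    have : p ∈ G.filter fun q => q.2 = p.2 := by simp [Finset.mem_filter, hp]
    rw [h0] at this; simp at this
  -- prefix row counts
  set R : Fin m → ℕ → ℕ :=
    fun i k => (G.filter fun p => p.1 = (i : ℤ) + 1 ∧ p.2 ≤ (k : ℤ)).card with hR
  -- upper bounds
  have hRk : ∀ i k, R i k ≤ k := by
    intro i k
    have hcard : (Finset.Icc (1 : ℤ) (k : ℤ)).card = k := by
      rw [Int.card_Icc]; simp
    have hle : (G.filter fun p => p.1 = (i : ℤ) + 1 ∧ p.2 ≤ (k : ℤ)).card ≤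
        (Finset.Icc (1 : ℤ) (k : ℤ)).card := by
      apply Finset.card_le_card_of_injOn (fun p => p.2)
      · intro p hp
        rw [Finset.mem_coe, Finset.mem_filter] at hp
        obtain ⟨j, hj⟩ := hcol p hp.1
        rw [Finset.mem_coe, Finset.mem_Icc]
        refine ⟨?_, hp.2.2⟩
        show 1 ≤ p.2; rw [hj]; omega
      · intro p hp q hq hpq
        simp only [Finset.coe_filter, Set.mem_setOf_eq] at hp hq
        exact Prod.ext (hp.2.1.trans hq.2.1.symm) hpq
    rw [hR]
    simpa [hcard] using hle
  have hRr : ∀ i k, R i k ≤ r i := by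
    intro i k
    rw [← h1 i, rowSum]
    apply Finset.card_le_card
    intro p hp
    rw [Finset.mem_filter] at hp ⊢
    exact ⟨hp.1, hp.2.1⟩
  -- sum identity
  have hsum : ∀ k : ℕ, k ≤ n → ∑ i : Fin m, R i k = ∑ i : Fin m, min (r i) k := by
    intro k hk
    have hrows : G.filter (fun p => p.2 ≤ (k : ℤ)) =
        Finset.univ.biUnion (fun i : Fin m =>
          G.filter fun p => p.1 = (i : ℤ) + 1 ∧ p.2 ≤ (k : ℤ)) := by
      ext p
      simp only [Finset.mem_filter, Finset.mem_biUnion, Finset.mem_univ, true_and]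
      constructor
      · rintro ⟨hp, hk'⟩
        obtain ⟨i, hi⟩ := hrow p hp
        exact ⟨i, hp, hi, hk'⟩
      · rintro ⟨i, hp, _, hk'⟩
        exact ⟨hp, hk'⟩
    have hcols : G.filter (fun p => p.2 ≤ (k : ℤ)) =
        Finset.univ.biUnion (fun j : Fin n =>
          G.filter fun p => p.2 = (j : ℤ) + 1 ∧ p.2 ≤ (k : ℤ)) := by
      ext p
      simp only [Finset.mem_filter, Finset.mem_biUnion, Finset.mem_univ, true_and]
      constructor
      · rintro ⟨hp, hk'⟩
        obtain ⟨j, hj⟩ := hcol p hp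
        exact ⟨j, hp, hj, hk'⟩
      · rintro ⟨j, hp, _, hk'⟩
        exact ⟨hp, hk'⟩
    have hdisj1 : ∀ i ∈ (Finset.univ : Finset (Fin m)), ∀ i' ∈ Finset.univ, i ≠ i' →
        Disjoint (G.filter fun p => p.1 = (i : ℤ) + 1 ∧ p.2 ≤ (k : ℤ))
          (G.filter fun p => p.1 = (i' : ℤ) + 1 ∧ p.2 ≤ (k : ℤ)) := by
      intro i _ i' _ hne
      rw [Finset.disjoint_left]
      intro p hp hp'
      rw [Finset.mem_filter] at hp hp'
      apply hne
      have : ((i : ℤ)) = (i' : ℤ) := by omega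
      exact Fin.ext (by exact_mod_cast this)
    have hdisj2 : ∀ j ∈ (Finset.univ : Finset (Fin n)), ∀ j' ∈ Finset.univ, j ≠ j' →
        Disjoint (G.filter fun p => p.2 = (j : ℤ) + 1 ∧ p.2 ≤ (k : ℤ))
          (G.filter fun p => p.2 = (j' : ℤ) + 1 ∧ p.2 ≤ (k : ℤ)) := by
      intro j _ j' _ hne
      rw [Finset.disjoint_left]
      intro p hp hp'
      rw [Finset.mem_filter] at hp hp'
      apply hne
      have : ((j : ℤ)) = (j' : ℤ) := by omega
      exact Fin.ext (by exact_mod_cast this)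
    have e1 : (G.filter (fun p => p.2 ≤ (k : ℤ))).card = ∑ i : Fin m, R i k := by
      rw [hrows, Finset.card_biUnion hdisj1]
    have e2 : (G.filter (fun p => p.2 ≤ (k : ℤ))).card =
        ∑ j : Fin n, (if (j : ℕ) + 1 ≤ k then conj m r ((j : ℕ) + 1) else 0) := by
      rw [hcols, Finset.card_biUnion hdisj2]
      apply Finset.sum_congr rfl
      intro j _
      by_cases hjk : (j : ℕ) + 1 ≤ k
      · rw [if_pos hjk, ← h3 j, colSum]
        congr 1
        ext p
        simp only [Finset.mem_filter, and_congr_right_iff]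
        intro _
        constructor
        · rintro ⟨h, _⟩; exact h
        · intro h; refine ⟨h, ?_⟩; rw [h]; omega
      · rw [if_neg hjk]
        rw [Finset.card_eq_zero, Finset.filter_eq_empty_iff]
        rintro p hp ⟨he, hle⟩
        rw [he] at hle
        omega
    rw [← e1, e2, conj_partial m n k r hk]
  -- pointwise equality
  have hpoint : ∀ k : ℕ, k ≤ n → ∀ i : Fin m, R i k = min (r i) k := by
    intro k hk
    have hle : ∀ i ∈ (Finset.univ : Finset (Fin m)), R i k ≤ min (r i) k :=
      fun i _ => le_min (hRr i k) (hRk i k)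
    have := (Finset.sum_eq_sum_iff_of_le hle).mp (hsum k hk)
    intro i; exact this i (Finset.mem_univ i)
  -- r i ≤ n
  have hrn : ∀ i, r i ≤ n := by
    intro i
    have hRn : R i n = r i := by
      have hfe : (G.filter fun p => p.1 = (i : ℤ) + 1 ∧ p.2 ≤ (n : ℤ)) =
          (G.filter fun p => p.1 = (i : ℤ) + 1) := by
        ext p
        simp only [Finset.mem_filter]
        constructor
        · rintro ⟨hp, h, _⟩; exact ⟨hp, h⟩
        · rintro ⟨hp, h⟩
          refine ⟨hp, h, ?_⟩
          obtain ⟨j, hj⟩ := hcol p hp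
          rw [hj]
          have : (j : ℕ) < n := j.isLt
          omega
      rw [hR]
      simp only
      rw [hfe]
      exact h1 i
    have := hpoint n le_rfl i
    rw [hRn] at this
    omega
  -- characterization of membership for points in the grid
  have hchar : ∀ (i : Fin m) (jn : ℕ), jn < n →
      (((i : ℤ) + 1, (jn : ℤ) + 1) ∈ G ↔ jn + 1 ≤ r i) := by
    intro i jn hjn
    have hsplit : (G.filter fun p => p.1 = (i : ℤ) + 1 ∧ p.2 ≤ (jn : ℤ) + 1) =
        (G.filter fun p => p.1 = (i : ℤ) + 1 ∧ p.2 ≤ (jn : ℤ)) ∪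
        (G.filter fun p => p = ((i : ℤ) + 1, (jn : ℤ) + 1)) := by
      ext p
      simp only [Finset.mem_filter, Finset.mem_union]
      constructor
      · rintro ⟨hp, ha, hb⟩
        by_cases hle : p.2 ≤ (jn : ℤ)
        · exact Or.inl ⟨hp, ha, hle⟩
        · refine Or.inr ⟨hp, ?_⟩
          have : p.2 = (jn : ℤ) + 1 := by omega
          exact Prod.ext ha this
      · rintro (⟨hp, ha, hb⟩ | ⟨hp, he⟩)
        · refine ⟨hp, ha, ?_⟩; omega
        · subst he; refine ⟨hp, rfl, ?_⟩; omega
    have hdisj : Disjoint (G.filter fun p => p.1 = (i : ℤ) + 1 ∧ p.2 ≤ (jn : ℤ))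
        (G.filter fun p => p = ((i : ℤ) + 1, (jn : ℤ) + 1)) := by
      rw [Finset.disjoint_left]
      rintro p hp hq
      rw [Finset.mem_filter] at hp hq
      rw [hq.2] at hp
      have := hp.2.2
      omega
    have hone : (G.filter fun p => p = ((i : ℤ) + 1, (jn : ℤ) + 1)).card =
        if ((i : ℤ) + 1, (jn : ℤ) + 1) ∈ G then 1 else 0 := by
      rw [Finset.filter_eq']
      split_ifs <;> simp
    have hc1 : R i (jn + 1) = R i jn + (if ((i : ℤ) + 1, (jn : ℤ) + 1) ∈ G then 1 else 0) := by
      rw [hR]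
      simp only
      rw [show ((jn + 1 : ℕ) : ℤ) = (jn : ℤ) + 1 by push_cast; ring]
      rw [hsplit, Finset.card_union_of_disjoint hdisj, hone]
    rw [hpoint (jn + 1) hjn i, hpoint jn (by omega) i] at hc1
    constructor
    · intro hmem
      rw [if_pos hmem] at hc1
      omega
    · intro hle
      by_contra hmem
      rw [if_neg hmem] at hc1
      omega
  -- conclude
  intro p
  constructor
  · intro hp
    obtain ⟨i, hi⟩ := hrow p hp
    obtain ⟨j, hj⟩ := hcol p hp
    refine ⟨i, (j : ℕ), ?_, ?_⟩
    · have hm : ((i : ℤ) + 1, ((j : ℕ) : ℤ) + 1) ∈ G := by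
        rw [show ((i : ℤ) + 1, ((j : ℕ) : ℤ) + 1) = p from (Prod.ext hi hj).symm]
        exact hp
      have := (hchar i (j : ℕ) j.isLt).mp hm
      omega
    · exact Prod.ext hi hj
  · rintro ⟨i, jn, hlt, rfl⟩
    have hn : jn < n := lt_of_lt_of_le hlt (hrn i)
    exact (hchar i jn hn).mpr (by omega)

theorem stmt3 (m n : ℕ) (r : Fin m → ℕ) (c : Fin n → ℕ) (F : Finset (ℤ × ℤ))
    (hr : Antitone r) (hc : Antitone c) (hF : hasLineSums F m n r c)
    (hcv : ∀ j : Fin n, c j = conj m r ((j : ℕ) + 1)) :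
    ∀ F' : Finset (ℤ × ℤ),
      (∀ i : ℤ, rowSum F' i = rowSum F i) →
      (∀ j : ℤ, colSum F' j = colSum F j) → F' = F := by
  obtain ⟨hF1, hF2, hF3, hF4⟩ := hF
  have keyF := key m n r F hF1 hF2 (fun j => (hF3 j).trans (hcv j)) hF4
  intro F' hR' hC'
  have keyF' := key m n r F' (fun i => (hR' _).trans (hF1 i))
    (fun i hi => (hR' i).trans (hF2 i hi))
    (fun j => (hC' _).trans ((hF3 j).trans (hcv j)))
    (fun j hj => (hC' j).trans (hF4 j hj))
  exact Finset.ext fun p => (keyF' p).trans (keyF p).symm
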